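/- Suppose M, K, L, ℛ > 0 with M ≥ Kℛ. Let κ(r) = L for r < ℛ and κ(r) = −K for r ≥ ℛ, and α = (M/2)∫₀^∞ exp((1/2)∫₀^x (M + κ(y)y) dy) dx. Then α ≤ (√(π/K) + 2ℛ/max(4, 2Mℛ + Lℛ²)) · M · exp(M²/(4K) + (L+K)ℛ²/4). -/

import Mathlib

open MeasureTheory

theorem alpha_bound_large_M (M K L R : ℝ) (hM : 0 < M) (hL : 0 < L)
    (hK : 0 < K) (hR : 0 < R) (hMK : K * R ≤ M)
    (κ : ℝ → ℝ) (hκ : ∀ r, κ r = if r < R then L else -K)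
    (α : ℝ)
    (hα : α = (M / 2) * ∫ x in Set.Ioi (0:ℝ),
        Real.exp ((1/2) * ∫ y in (0:ℝ)..x, M + κ y * y)) :
    α ≤ (Real.sqrt (Real.pi / K) + 2 * R / max 4 (2 * M * R + L * R ^ 2)) * M *
        Real.exp (M ^ 2 / (4 * K) + (L + K) * R ^ 2 / 4) := by
  have hK4 : (0:ℝ) < K / 4 := by linarith
  set f : ℝ → ℝ := fun y => M + κ y * y with hfdef
  set F : ℝ → ℝ := fun x => Real.exp ((1/2) * ∫ y in (0:ℝ)..x, f y) with hFdef
  set E : ℝ := M ^ 2 / (4 * K) + (L + K) * R ^ 2 / 4 with hEdef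
  set c : ℝ := M / 2 + L * R / 4 with hcdef
  set t : ℝ := M * R / 2 + L * R ^ 2 / 4 with htdef
  have hc : 0 < c := by positivity
  have ht : 0 < t := by positivity
  -- measurability and interval integrability of f
  have hκmeas : Measurable κ := by
    have : κ = fun r => if r < R then L else -K := funext hκ
    rw [this]
    exact Measurable.ite measurableSet_Iio measurable_const measurable_const
  have hfmeas : Measurable f := measurable_const.add (hκmeas.mul measurable_id)
  have hfint : ∀ a b : ℝ, IntervalIntegrable f volume a b := by
    intro a b
    refine IntervalIntegrable.mono_fun'
      (g := fun y => |M| + (L + K) * |y|) ?_ hfmeas.aestronglyMeasurable ?_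
    · exact (continuous_const.add (continuous_const.mul continuous_abs)).intervalIntegrable a b
    · refine Filter.Eventually.of_forall fun y => ?_
      have hκy : |κ y| ≤ L + K := by
        rw [hκ]
        split_ifs
        · rw [abs_of_pos hL]; linarith
        · rw [abs_neg, abs_of_pos hK]; linarith
      calc ‖f y‖ = |M + κ y * y| := rfl
        _ ≤ |M| + |κ y * y| := abs_add_le _ _
        _ ≤ |M| + (L + K) * |y| := by
            rw [abs_mul]
            exact add_le_add le_rfl (mul_le_mul_of_nonneg_right hκy (abs_nonneg y))
  -- inner integral on [0, x] for x ≤ R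
  have hne : ∀ᵐ (y : ℝ), y ≠ R := by
    rw [MeasureTheory.ae_iff]
    simpa using MeasureTheory.measure_singleton (μ := (volume : Measure ℝ)) R
  have hI1 : ∀ x : ℝ, 0 ≤ x → x ≤ R → (∫ y in (0:ℝ)..x, f y) = M * x + L * x ^ 2 / 2 := by
    intro x hx0 hxR
    rw [intervalIntegral.integral_congr_ae
      (g := fun y => M + L * y) ?_]
    · have hder : ∀ y ∈ Set.uIcc (0:ℝ) x,
          HasDerivAt (fun y => M * y + L * y ^ 2 / 2) (M + L * y) y := by
        intro y _
        have h1 : HasDerivAt (fun y : ℝ => M * y) M y := by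
          simpa using (hasDerivAt_id y).const_mul M
        have h2 : HasDerivAt (fun y : ℝ => L * y ^ 2 / 2) (L * y) y := by
          have := ((hasDerivAt_pow 2 y).const_mul L).div_const 2
          simpa [mul_comm, mul_assoc, mul_div_assoc] using this
        exact h1.add h2
      rw [intervalIntegral.integral_eq_sub_of_hasDerivAt hder
        ((continuous_const.add (continuous_const.mul continuous_id)).intervalIntegrable _ _)]
      ring
    · filter_upwards [hne] with y hy hymem
      rw [Set.uIoc_of_le hx0] at hymem
      have hyR : y < R := lt_of_le_of_ne (hymem.2.trans hxR) hy
      simp [hfdef, hκ, if_pos hyR]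
  -- inner integral on [R, x]
  have hI2 : ∀ x : ℝ, R ≤ x →
      (∫ y in R..x, f y) = (M * x - K * x ^ 2 / 2) - (M * R - K * R ^ 2 / 2) := by
    intro x hxR
    rw [intervalIntegral.integral_congr (g := fun y => M - K * y) ?_]
    · have hder : ∀ y ∈ Set.uIcc R x,
          HasDerivAt (fun y => M * y - K * y ^ 2 / 2) (M - K * y) y := by
        intro y _
        have h1 : HasDerivAt (fun y : ℝ => M * y) M y := by
          simpa using (hasDerivAt_id y).const_mul M
        have h2 : HasDerivAt (fun y : ℝ => K * y ^ 2 / 2) (K * y) y := by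
          have := ((hasDerivAt_pow 2 y).const_mul K).div_const 2
          simpa [mul_comm, mul_assoc, mul_div_assoc] using this
        exact h1.sub h2
      rw [intervalIntegral.integral_eq_sub_of_hasDerivAt hder
        ((continuous_const.sub (continuous_const.mul continuous_id)).intervalIntegrable _ _)]
    · intro y hy
      rw [Set.uIcc_of_le hxR] at hy
      have : ¬ y < R := not_lt.mpr hy.1
      simp [hfdef, hκ, if_neg this]
      ring
  -- inner integral for x > R
  have hI3 : ∀ x : ℝ, R < x →
      (∫ y in (0:ℝ)..x, f y) = M * x + (L + K) * R ^ 2 / 2 - K * x ^ 2 / 2 := by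
    intro x hx
    rw [← intervalIntegral.integral_add_adjacent_intervals (hfint 0 R) (hfint R x),
      hI1 R hR.le le_rfl, hI2 x hx.le]
    ring
  -- nice forms of F on the two pieces
  have hF1 : ∀ x ∈ Set.Ioc (0:ℝ) R, F x = Real.exp ((1/2) * (M * x + L * x ^ 2 / 2)) := by
    intro x hx
    rw [hFdef]; simp only
    rw [hI1 x hx.1.le hx.2]
  have hF2 : ∀ x ∈ Set.Ioi R,
      F x = Real.exp E * Real.exp (-(K/4) * (x - M/K) ^ 2) := by
    intro x hx
    rw [hFdef]; simp only
    rw [hI3 x hx, ← Real.exp_add]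
    congr 1
    rw [hEdef]
    field_simp
    ring
  -- integrability on the two pieces
  have hcont1 : Continuous fun x : ℝ => Real.exp ((1/2) * (M * x + L * x ^ 2 / 2)) :=
    Real.continuous_exp.comp (continuous_const.mul ((continuous_const.mul continuous_id).add
      ((continuous_const.mul (continuous_pow 2)).div_const 2)))
  have hint1 : IntegrableOn F (Set.Ioc (0:ℝ) R) := by
    exact (hcont1.integrableOn_Ioc).congr_fun (fun x hx => (hF1 x hx).symm) measurableSet_Ioc
  have hintg2 : Integrable fun x : ℝ => Real.exp E * Real.exp (-(K/4) * (x - M/K) ^ 2) :=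
    ((integrable_exp_neg_mul_sq hK4).comp_sub_right (M/K)).const_mul _
  have hint2 : IntegrableOn F (Set.Ioi R) :=
    (hintg2.integrableOn).congr_fun (fun x hx => (hF2 x hx).symm) measurableSet_Ioi
  -- split the integral
  have hsplit : (∫ x in Set.Ioi (0:ℝ), F x)
      = (∫ x in Set.Ioc (0:ℝ) R, F x) + ∫ x in Set.Ioi R, F x := by
    rw [← setIntegral_union (Set.Ioc_disjoint_Ioi le_rfl) measurableSet_Ioi hint1 hint2,
      Set.Ioc_union_Ioi_eq_Ioi hR.le]
  -- bound piece 1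
  have hb1 : (∫ x in Set.Ioc (0:ℝ) R, F x) ≤ (Real.exp t - 1) / c := by
    have hmono : (∫ x in Set.Ioc (0:ℝ) R, F x)
        ≤ ∫ x in Set.Ioc (0:ℝ) R, Real.exp (c * x) := by
      refine setIntegral_mono_on hint1
        ((Real.continuous_exp.comp (continuous_const.mul continuous_id)).integrableOn_Ioc)
        measurableSet_Ioc (fun x hx => ?_)
      rw [hF1 x hx]
      apply Real.exp_le_exp.mpr
      have h1 : L * x ^ 2 ≤ L * R * x := by
        nlinarith [mul_nonneg hL.le hx.1.le, hx.2]
      rw [hcdef]; nlinarith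
    have hval : (∫ x in Set.Ioc (0:ℝ) R, Real.exp (c * x)) = (Real.exp t - 1) / c := by
      rw [← intervalIntegral.integral_of_le hR.le]
      have hder : ∀ y ∈ Set.uIcc (0:ℝ) R,
          HasDerivAt (fun y => Real.exp (c * y) / c) (Real.exp (c * y)) y := by
        intro y _
        have h1 : HasDerivAt (fun y : ℝ => c * y) c y := by
          simpa using (hasDerivAt_id y).const_mul c
        have := h1.exp.div_const c
        simpa [mul_div_assoc, mul_div_cancel_right₀ _ hc.ne'] using this
      rw [intervalIntegral.integral_eq_sub_of_hasDerivAt hder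
        ((Real.continuous_exp.comp (continuous_const.mul continuous_id)).intervalIntegrable _ _)]
      rw [htdef, hcdef]
      rw [mul_zero, Real.exp_zero]
      ring_nf
    linarith [hmono, hval.le, hval.ge]
  -- bound piece 2
  have hb2 : (∫ x in Set.Ioi R, F x) ≤ Real.exp E * (2 * Real.sqrt (Real.pi / K)) := by
    have h1 : (∫ x in Set.Ioi R, F x)
        = ∫ x in Set.Ioi R, Real.exp E * Real.exp (-(K/4) * (x - M/K) ^ 2) :=
      setIntegral_congr_fun measurableSet_Ioi hF2
    have h2 : (∫ x in Set.Ioi R, Real.exp E * Real.exp (-(K/4) * (x - M/K) ^ 2))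
        ≤ ∫ x : ℝ, Real.exp E * Real.exp (-(K/4) * (x - M/K) ^ 2) :=
      setIntegral_le_integral hintg2 (Filter.Eventually.of_forall fun x => by positivity)
    have h3 : (∫ x : ℝ, Real.exp E * Real.exp (-(K/4) * (x - M/K) ^ 2))
        = Real.exp E * (2 * Real.sqrt (Real.pi / K)) := by
      rw [integral_const_mul]
      congr 1
      rw [integral_sub_right_eq_self (fun x => Real.exp (-(K/4) * x ^ 2)) (M/K)]
      rw [integral_gaussian]
      rw [show Real.pi / (K/4) = 4 * (Real.pi / K) by field_simp]
      rw [show (4 : ℝ) = 2 ^ 2 by norm_num, Real.sqrt_mul (by positivity),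
        Real.sqrt_sq (by norm_num)]
    rw [h1]; rw [h3] at h2; exact h2
  -- t ≤ E
  have htE : t ≤ E := by
    have key : K * t ≤ K * E := by
      rw [htdef, hEdef]
      have h4 : K * (M ^ 2 / (4 * K)) = M ^ 2 / 4 := by field_simp
      nlinarith [sq_nonneg (M - K * R)]
    exact le_of_mul_le_mul_left key hK
  have hexptE : Real.exp t ≤ Real.exp E := Real.exp_le_exp.mpr htE
  -- key elementary bound: (exp t - 1) * max 1 t ≤ t * exp t
  have hkey : (Real.exp t - 1) * max 1 t ≤ t * Real.exp t := by
    rcases le_total t 1 with h | h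
    · rw [max_eq_left h]
      have h0 : 1 - t ≤ (Real.exp t)⁻¹ := by
        rw [← Real.exp_neg]; linarith [Real.add_one_le_exp (-t)]
      have h1 : (1 - t) * Real.exp t ≤ 1 := by
        calc (1 - t) * Real.exp t ≤ (Real.exp t)⁻¹ * Real.exp t :=
              mul_le_mul_of_nonneg_right h0 (Real.exp_pos t).le
          _ = 1 := inv_mul_cancel₀ (Real.exp_pos t).ne'
      have h2 : (1 - t) * Real.exp t = Real.exp t - t * Real.exp t := by ring
      rw [h2] at h1
      linarith
    · rw [max_eq_right h]
      have h2 : (Real.exp t - 1) * t = t * Real.exp t - t := by ring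
      rw [h2]
      linarith [ht.le]
  -- rewrite max 4 (2MR + LR^2) = 4 * max 1 t
  have hmax : max 4 (2 * M * R + L * R ^ 2) = 4 * max 1 t := by
    rw [htdef]
    rcases le_total (1:ℝ) (M * R / 2 + L * R ^ 2 / 4) with h | h
    · rw [max_eq_right h, max_eq_right (by linarith)]; ring
    · rw [max_eq_left h, max_eq_left (by linarith)]; norm_num
  have hmaxpos : (0:ℝ) < max 1 t := lt_of_lt_of_le one_pos (le_max_left _ _)
  -- bound for piece 1 against target
  have hb1' : (Real.exp t - 1) / c ≤ R * Real.exp E / max 1 t := by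
    rw [div_le_div_iff₀ hc hmaxpos]
    have hct : c * R = t := by rw [hcdef, htdef]; ring
    calc (Real.exp t - 1) * max 1 t ≤ t * Real.exp t := hkey
      _ ≤ t * Real.exp E := by
          exact mul_le_mul_of_nonneg_left hexptE ht.le
      _ = R * Real.exp E * c := by rw [← hct]; ring
  -- assemble
  have hFle : (∫ x in Set.Ioi (0:ℝ), F x)
      ≤ R * Real.exp E / max 1 t + Real.exp E * (2 * Real.sqrt (Real.pi / K)) := by
    rw [hsplit]
    exact add_le_add (hb1.trans hb1') hb2
  have hαF : α = (M / 2) * ∫ x in Set.Ioi (0:ℝ), F x := hα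
  rw [hαF]
  have goal_eq : (Real.sqrt (Real.pi / K) + 2 * R / max 4 (2 * M * R + L * R ^ 2)) * M *
      Real.exp E
      = (M / 2) * (R * Real.exp E / max 1 t + Real.exp E * (2 * Real.sqrt (Real.pi / K))) := by
    rw [hmax]
    field_simp
    ring
  rw [hEdef] at goal_eq ⊢
  rw [goal_eq]
  exact mul_le_mul_of_nonneg_left hFle (by linarith)
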